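/- Let V ∈ ℝ^{(d+m)×(d+m)} be symmetric positive definite with block decomposition V = [[V₁₁, V₁₂],[V₂₁, V₂₂]] (V₁₁ of size d×d, V₂₂ of size m×m), let S = V₂₂ − V₂₁ V₁₁⁻¹ V₁₂ be the Schur complement of V₁₁ (which is positive definite), and let P_u = [0; I_m] ∈ ℝ^{(d+m)×m} be the injection of the last m coordinates. Then for every matrix T ∈ ℝ^{q×(d+m)}, ‖T V⁻¹ P_u‖ ≤ ‖T V^{−1/2}‖ / sqrt(λ_min(S)), where V^{1/2} denotes the positive definite square root of V. -/

import Mathlib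

open Matrix
open scoped Matrix.Norms.L2Operator

/-- Smallest eigenvalue of a symmetric real matrix (junk value `0` otherwise). -/
noncomputable def lambdaMin {n : Type*} [Fintype n] [DecidableEq n]
    (M : Matrix n n ℝ) : ℝ :=
  if h : M.IsHermitian then ⨅ i, h.eigenvalues i else 0

/-- The positive semidefinite square root of a positive semidefinite matrix
(the definition `Matrix.PosSemidef.sqrt` of the older Mathlib, since removed). -/
noncomputable def Matrix.PosSemidef.sqrt {n : Type*} [Fintype n] [DecidableEq n]
    {A : Matrix n n ℝ} (hA : A.PosSemidef) : Matrix n n ℝ :=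
  hA.1.eigenvectorUnitary.1 * diagonal ((↑) ∘ (√·) ∘ hA.1.eigenvalues) *
  (star hA.1.eigenvectorUnitary : Matrix n n ℝ)

open Classical in
/-- The positive semidefinite square root of a real matrix
(junk value `0` if the matrix is not positive semidefinite). -/
noncomputable def matSqrt {n : Type*} [Fintype n] [DecidableEq n]
    (M : Matrix n n ℝ) : Matrix n n ℝ :=
  if h : M.PosSemidef then h.sqrt else 0

/- ### Auxiliary lemmas -/

lemma aux_rayleigh {n : Type*} [Fintype n] [DecidableEq n] {M : Matrix n n ℝ}
    (hM : M.IsHermitian) (c : ℝ) (hc : ∀ i, c ≤ hM.eigenvalues i) (y : n → ℝ) :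
    c * (y ⬝ᵥ y) ≤ y ⬝ᵥ (M *ᵥ y) := by
  set U : Matrix n n ℝ := (hM.eigenvectorUnitary : Matrix n n ℝ) with hU
  have hUs : U * star U = 1 := Unitary.mul_star_self_of_mem hM.eigenvectorUnitary.2
  set z : n → ℝ := star U *ᵥ y with hz
  have h1 : y ⬝ᵥ (M *ᵥ y) = z ⬝ᵥ (diagonal hM.eigenvalues *ᵥ z) := by
    conv_lhs => rw [hM.spectral_theorem, Unitary.conjStarAlgAut_apply]
    have : (RCLike.ofReal ∘ hM.eigenvalues : n → ℝ) = hM.eigenvalues := by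
      funext i; simp
    rw [this]
    rw [← mulVec_mulVec, ← mulVec_mulVec, dotProduct_mulVec y U, hz]
    congr 1
    rw [star_eq_conjTranspose, conjTranspose_eq_transpose_of_trivial, ← mulVec_transpose]
  have h2 : z ⬝ᵥ z = y ⬝ᵥ y := by
    rw [hz, dotProduct_mulVec, star_eq_conjTranspose, conjTranspose_eq_transpose_of_trivial,
      ← mulVec_transpose, transpose_transpose, mulVec_mulVec,
      ← conjTranspose_eq_transpose_of_trivial, ← star_eq_conjTranspose, hUs, one_mulVec]
  rw [h1, ← h2]
  simp only [dotProduct, mulVec_diagonal, Finset.mul_sum]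
  apply Finset.sum_le_sum
  intro i _
  nlinarith [mul_le_mul_of_nonneg_left (hc i) (mul_self_nonneg (z i))]

lemma aux_lambdaMin_le {n : Type*} [Fintype n] [DecidableEq n] {M : Matrix n n ℝ}
    (hM : M.IsHermitian) (i : n) : lambdaMin M ≤ hM.eigenvalues i := by
  rw [lambdaMin, dif_pos hM]
  exact ciInf_le (Set.Finite.bddBelow (Set.finite_range _)) i

lemma aux_lambdaMin_pos {n : Type*} [Fintype n] [DecidableEq n] [Nonempty n] {M : Matrix n n ℝ}
    (hM : M.PosDef) : 0 < lambdaMin M := by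
  rw [lambdaMin, dif_pos hM.1]
  obtain ⟨i, hi⟩ := exists_eq_ciInf_of_finite (f := hM.1.eigenvalues)
  rw [← hi]
  exact hM.eigenvalues_pos i

lemma aux_norm_inv_le {n : Type*} [Fintype n] [DecidableEq n] [Nonempty n] {M : Matrix n n ℝ}
    (hM : M.PosDef) : ‖M⁻¹‖ ≤ 1 / lambdaMin M := by
  have hc := aux_lambdaMin_pos hM
  set c := lambdaMin M
  rw [Matrix.l2_opNorm_def]
  apply ContinuousLinearMap.opNorm_le_bound _ (by positivity)
  intro x
  set y : n → ℝ := M⁻¹ *ᵥ (WithLp.equiv 2 _ x) with hy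
  have hMy : M *ᵥ y = WithLp.equiv 2 _ x := by
    rw [hy, mulVec_mulVec, mul_nonsing_inv _ (isUnit_iff_ne_zero.mpr hM.det_pos.ne'), one_mulVec]
  have happ : ((Matrix.toEuclideanLin.trans LinearMap.toContinuousLinearMap) M⁻¹) x
      = (WithLp.equiv 2 (n → ℝ)).symm y := by
    simp [Matrix.toEuclideanLin_apply, hy]
  rw [happ]
  set Y : EuclideanSpace ℝ n := (WithLp.equiv 2 (n → ℝ)).symm y with hY
  have hYn : y ⬝ᵥ y = ‖Y‖ ^ 2 := by
    rw [← real_inner_self_eq_norm_sq]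
    simp [hY, inner, dotProduct, mul_comm]
  have hray : c * (y ⬝ᵥ y) ≤ y ⬝ᵥ (M *ᵥ y) := aux_rayleigh hM.1 c (aux_lambdaMin_le hM.1) y
  have hip : y ⬝ᵥ (M *ᵥ y) = inner ℝ Y x := by
    rw [hMy]
    simp [hY, inner, dotProduct, mul_comm]
  have hcs : (inner ℝ Y x : ℝ) ≤ ‖Y‖ * ‖x‖ := real_inner_le_norm Y x
  have key : c * ‖Y‖ ^ 2 ≤ ‖Y‖ * ‖x‖ := by
    rw [← hYn]; exact hray.trans (hip ▸ hcs)
  rcases eq_or_lt_of_le (norm_nonneg Y) with h0 | h0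
  · rw [← h0]; positivity
  · rw [div_mul_eq_mul_div, le_div_iff₀ hc]
    nlinarith

lemma aux_sqrt_mul_self {n : Type*} [Fintype n] [DecidableEq n] {A : Matrix n n ℝ}
    (hA : A.PosSemidef) : hA.sqrt * hA.sqrt = A := by
  have hU : star (hA.1.eigenvectorUnitary : Matrix n n ℝ) * hA.1.eigenvectorUnitary = 1 :=
    Unitary.star_mul_self_of_mem hA.1.eigenvectorUnitary.2
  conv_rhs => rw [hA.1.spectral_theorem, Unitary.conjStarAlgAut_apply]
  simp only [Matrix.PosSemidef.sqrt, Matrix.mul_assoc]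
  rw [← Matrix.mul_assoc _ _ (diagonal _ * _), hU, Matrix.one_mul, ← Matrix.mul_assoc (diagonal _),
    diagonal_mul_diagonal]
  congr 3
  funext i
  simp [Real.mul_self_sqrt (hA.eigenvalues_nonneg i)]

lemma aux_sqrt_herm {n : Type*} [Fintype n] [DecidableEq n] {A : Matrix n n ℝ}
    (hA : A.PosSemidef) : (hA.sqrt)ᴴ = hA.sqrt := by
  simp only [Matrix.PosSemidef.sqrt, conjTranspose_mul, diagonal_conjTranspose,
    Matrix.mul_assoc, star_eq_conjTranspose, conjTranspose_conjTranspose]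
  congr 2

section Blocks
variable {d m : ℕ} {V : Matrix (Fin d ⊕ Fin m) (Fin d ⊕ Fin m) ℝ}

lemma aux_pu_conj (M : Matrix (Fin d ⊕ Fin m) (Fin d ⊕ Fin m) ℝ) :
    (Matrix.fromRows (0 : Matrix (Fin d) (Fin m) ℝ) (1 : Matrix (Fin m) (Fin m) ℝ))ᴴ * M *
      Matrix.fromRows (0 : Matrix (Fin d) (Fin m) ℝ) (1 : Matrix (Fin m) (Fin m) ℝ) =
    Matrix.toBlocks₂₂ M := by
  ext i j
  simp [Matrix.mul_apply, Fintype.sum_sum_type, Matrix.toBlocks₂₂,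
    Matrix.one_apply, Finset.sum_ite_eq, Finset.sum_ite_eq', Sum.elim_inl, Sum.elim_inr]

lemma aux_hermA (hV : V.IsHermitian) : (Matrix.toBlocks₁₁ V).IsHermitian := by
  ext i j
  simpa [Matrix.toBlocks₁₁] using hV.apply (Sum.inl i) (Sum.inl j)

lemma aux_blocks21 (hV : V.IsHermitian) : Matrix.toBlocks₂₁ V = (Matrix.toBlocks₁₂ V)ᴴ := by
  ext i j
  simpa [Matrix.toBlocks₂₁, Matrix.toBlocks₁₂] using (hV.apply (Sum.inr i) (Sum.inl j)).symm

lemma aux_posDefA (hV : V.PosDef) : (Matrix.toBlocks₁₁ V).PosDef := by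
  refine Matrix.PosDef.of_dotProduct_mulVec_pos (aux_hermA hV.1) (fun x hx => ?_)
  have hx' : (Sum.elim x 0 : Fin d ⊕ Fin m → ℝ) ≠ 0 := by
    intro h
    exact hx (funext fun i => by simpa using congrFun h (Sum.inl i))
  have h := hV.dotProduct_mulVec_pos hx'
  rw [← Matrix.fromBlocks_toBlocks V, Matrix.fromBlocks_mulVec, Function.star_sumElim,
    Matrix.dotProduct_block] at h
  simpa using h

lemma aux_posDefS (hV : V.PosDef) :
    (Matrix.toBlocks₂₂ V - Matrix.toBlocks₂₁ V * (Matrix.toBlocks₁₁ V)⁻¹ *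
      Matrix.toBlocks₁₂ V).PosDef := by
  set A := Matrix.toBlocks₁₁ V with hA'
  set B := Matrix.toBlocks₁₂ V with hB'
  set D := Matrix.toBlocks₂₂ V with hD'
  have hA := aux_posDefA hV
  haveI : Invertible A := A.invertibleOfIsUnitDet (isUnit_iff_ne_zero.mpr hA.det_pos.ne')
  have hC : Matrix.toBlocks₂₁ V = Bᴴ := aux_blocks21 hV.1
  have hVb : V = Matrix.fromBlocks A B Bᴴ D := by
    rw [← hC, hA', hB', hD', Matrix.fromBlocks_toBlocks]
  rw [hC]
  refine Matrix.PosDef.of_dotProduct_mulVec_pos ?_ ?_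
  · exact (Matrix.IsHermitian.fromBlocks₁₁ B D hA.1).mp (hVb ▸ hV.1)
  · intro x hx
    have hx' : (Sum.elim (-((A⁻¹ * B) *ᵥ x)) x : Fin d ⊕ Fin m → ℝ) ≠ 0 := by
      intro h
      exact hx (funext fun i => by simpa using congrFun h (Sum.inr i))
    have h := hV.dotProduct_mulVec_pos hx'
    rw [hVb, dotProduct_mulVec, Matrix.schur_complement_eq₁₁ B D _ _ hA.1, neg_add_cancel,
      dotProduct_zero, zero_add] at h
    rwa [dotProduct_mulVec]

lemma aux_inv22 (hV : V.PosDef) :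
    Matrix.toBlocks₂₂ V⁻¹ = (Matrix.toBlocks₂₂ V - Matrix.toBlocks₂₁ V *
      (Matrix.toBlocks₁₁ V)⁻¹ * Matrix.toBlocks₁₂ V)⁻¹ := by
  set A := Matrix.toBlocks₁₁ V with hA'
  set B := Matrix.toBlocks₁₂ V with hB'
  set D := Matrix.toBlocks₂₂ V with hD'
  have hA := aux_posDefA hV
  haveI : Invertible A := A.invertibleOfIsUnitDet (isUnit_iff_ne_zero.mpr hA.det_pos.ne')
  have hC : Matrix.toBlocks₂₁ V = Bᴴ := aux_blocks21 hV.1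
  have hVb : V = Matrix.fromBlocks A B Bᴴ D := by
    rw [← hC, hA', hB', hD', Matrix.fromBlocks_toBlocks]
  have hS' := aux_posDefS hV
  rw [hC] at hS' ⊢
  haveI invS : Invertible (D - Bᴴ * A⁻¹ * B) :=
    Matrix.invertibleOfIsUnitDet _ (isUnit_iff_ne_zero.mpr hS'.det_pos.ne')
  haveI invS2 : Invertible (D - Bᴴ * ⅟A * B) := invS.copy _ (by rw [invOf_eq_nonsing_inv])
  haveI invV : Invertible (Matrix.fromBlocks A B Bᴴ D) := by
    rw [← hVb]
    exact V.invertibleOfIsUnitDet (isUnit_iff_ne_zero.mpr hV.det_pos.ne')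
  have h := Matrix.invOf_fromBlocks₁₁_eq A B Bᴴ D
  have h22 := congrArg Matrix.toBlocks₂₂ h
  rw [Matrix.toBlocks_fromBlocks₂₂] at h22
  calc Matrix.toBlocks₂₂ V⁻¹ = Matrix.toBlocks₂₂ (⅟(Matrix.fromBlocks A B Bᴴ D)) := by
        rw [invOf_eq_nonsing_inv, ← hVb]
    _ = ⅟(D - Bᴴ * ⅟A * B) := h22
    _ = (D - Bᴴ * A⁻¹ * B)⁻¹ := by rw [invOf_eq_nonsing_inv, invOf_eq_nonsing_inv]

end Blocks

/-- For a positive definite block matrix `V` with Schur complement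
`S = V₂₂ - V₂₁ V₁₁⁻¹ V₁₂` (which is positive definite) and the injection `P_u` of the
last `m` coordinates, every `T` satisfies `‖T V⁻¹ P_u‖ ≤ ‖T V^{-1/2}‖ / sqrt(λ_min(S))`. -/
theorem schur_denominator_bound
    (d m q : ℕ)
    (V : Matrix (Fin d ⊕ Fin m) (Fin d ⊕ Fin m) ℝ) (hV : V.PosDef)
    (S : Matrix (Fin m) (Fin m) ℝ)
    (hS : S = Matrix.toBlocks₂₂ V -
        Matrix.toBlocks₂₁ V * (Matrix.toBlocks₁₁ V)⁻¹ * Matrix.toBlocks₁₂ V)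
    (Pu : Matrix (Fin d ⊕ Fin m) (Fin m) ℝ)
    (hPu : Pu = Matrix.fromRows (0 : Matrix (Fin d) (Fin m) ℝ)
        (1 : Matrix (Fin m) (Fin m) ℝ)) :
    S.PosDef ∧
      ∀ T : Matrix (Fin q) (Fin d ⊕ Fin m) ℝ,
        ‖T * V⁻¹ * Pu‖ ≤ ‖T * (matSqrt V)⁻¹‖ / Real.sqrt (lambdaMin S) := by
  have hS' : S.PosDef := hS ▸ aux_posDefS hV
  refine ⟨hS', fun T => ?_⟩
  rcases Nat.eq_zero_or_pos m with hm | hm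
  · -- `Fin m` is empty, so the LHS matrix is `0`.
    subst hm
    have hz : T * V⁻¹ * Pu = 0 := by
      ext i j
      exact absurd j.2 (by omega)
    rw [hz, norm_zero]
    positivity
  haveI : Nonempty (Fin m) := ⟨⟨0, hm⟩⟩
  -- the square root and its inverse
  have hsq : matSqrt V = hV.posSemidef.sqrt := dif_pos hV.posSemidef
  set R : Matrix (Fin d ⊕ Fin m) (Fin d ⊕ Fin m) ℝ := hV.posSemidef.sqrt with hR
  have hRR : R * R = V := aux_sqrt_mul_self hV.posSemidef
  have hRherm : Rᴴ = R := aux_sqrt_herm hV.posSemidef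
  set W : Matrix (Fin d ⊕ Fin m) (Fin d ⊕ Fin m) ℝ := R⁻¹ with hW
  have hWherm : Wᴴ = W := by rw [hW, Matrix.conjTranspose_nonsing_inv, hRherm]
  have hVinv : V⁻¹ = W * W := by rw [← hRR, Matrix.mul_inv_rev, hW]
  -- the key factor
  set N : Matrix (Fin d ⊕ Fin m) (Fin m) ℝ := W * Pu with hN
  have hc := aux_lambdaMin_pos hS'
  set c := lambdaMin S with hcdef
  have hNN : Nᴴ * N = S⁻¹ := by
    calc Nᴴ * N = Puᴴ * Wᴴ * (W * Pu) := by rw [hN, Matrix.conjTranspose_mul]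
      _ = Puᴴ * (W * W) * Pu := by rw [hWherm]; simp only [Matrix.mul_assoc]
      _ = Puᴴ * V⁻¹ * Pu := by rw [hVinv]
      _ = Matrix.toBlocks₂₂ V⁻¹ := by rw [hPu]; exact aux_pu_conj _
      _ = S⁻¹ := by rw [aux_inv22 hV, hS]
  have hNle : ‖N‖ ≤ 1 / Real.sqrt c := by
    have h1 : ‖N‖ * ‖N‖ = ‖S⁻¹‖ := by rw [← hNN, Matrix.l2_opNorm_conjTranspose_mul_self]
    have h2 : ‖S⁻¹‖ ≤ 1 / c := aux_norm_inv_le hS'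
    have h3 : ‖N‖ * ‖N‖ ≤ 1 / c := h1 ▸ h2
    rw [one_div, ← Real.sqrt_inv]
    rw [show (c⁻¹ : ℝ) = 1 / c by rw [one_div]] at *
    nlinarith [Real.sq_sqrt (le_of_lt (by positivity : (0:ℝ) < 1 / c)),
      Real.sqrt_nonneg (1 / c), norm_nonneg N]
  have hfact : T * V⁻¹ * Pu = (T * (matSqrt V)⁻¹) * N := by
    rw [hVinv, hN, hsq, ← hW]
    simp only [Matrix.mul_assoc]
  calc ‖T * V⁻¹ * Pu‖ = ‖(T * (matSqrt V)⁻¹) * N‖ := by rw [hfact]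
    _ ≤ ‖T * (matSqrt V)⁻¹‖ * ‖N‖ := Matrix.l2_opNorm_mul _ _
    _ ≤ ‖T * (matSqrt V)⁻¹‖ * (1 / Real.sqrt c) :=
        mul_le_mul_of_nonneg_left hNle (norm_nonneg _)
    _ = ‖T * (matSqrt V)⁻¹‖ / Real.sqrt c := by ring
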